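/- In any 2-coloring of the n×m hexagonal grid, the color-boundary subgraph of the dual graph (consisting of dual edges bordering two differently colored hexagons) has every vertex of degree 0, 1, or 2, with degree-1 vertices occurring only at border vertices of the dual graph; consequently its edge set decomposes into vertex-disjoint paths and cycles, where every path starts and ends at border vertices. -/

import Mathlib

/-- The hexagon `(i,j)` belongs to the `n × m` hexagonal grid. -/
def hexOK (n m : ℕ) (p : ℤ × ℤ) : Prop :=
  1 ≤ p.1 ∧ p.1 ≤ (n : ℤ) ∧ 1 ≤ p.2 ∧ p.2 ≤ (m : ℤ)

/-- Vertices of the dual graph: `(i, j, false)` is the point where hexagons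
`(i,j), (i-1,j), (i-1,j+1)` meet, and `(i, j, true)` the point where
`(i,j), (i,j+1), (i-1,j+1)` meet. -/
abbrev DualV := ℤ × ℤ × Bool

/-- The (up to three) hexagons meeting at a dual vertex. -/
def hexesOf (v : DualV) : Set (ℤ × ℤ) :=
  if v.2.2 then {(v.1, v.2.1), (v.1, v.2.1 + 1), (v.1 - 1, v.2.1 + 1)}
  else {(v.1, v.2.1), (v.1 - 1, v.2.1), (v.1 - 1, v.2.1 + 1)}

/-- The three types of dual edges out of a `-` vertex. -/
def dualBase (v w : DualV) : Prop :=
  v.2.2 = false ∧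
    (w = (v.1, v.2.1, true) ∨ w = (v.1 - 1, v.2.1, true) ∨ w = (v.1, v.2.1 - 1, true))

/-- Adjacency in the dual graph. -/
def dualAdj (v w : DualV) : Prop := dualBase v w ∨ dualBase w v

/-- A dual edge lies on the colour boundary: the two grid hexagons it separates
are both in the grid and have different colours. -/
def boundaryAdj (n m : ℕ) (χ : ℤ × ℤ → Bool) (v w : DualV) : Prop :=
  dualAdj v w ∧ ∃ p q : ℤ × ℤ, p ∈ hexesOf v ∩ hexesOf w ∧ q ∈ hexesOf v ∩ hexesOf w ∧
    p ≠ q ∧ hexOK n m p ∧ hexOK n m q ∧ χ p ≠ χ q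

/-- The colour-boundary subgraph of the dual graph. -/
def bGraph (n m : ℕ) (χ : ℤ × ℤ → Bool) : SimpleGraph DualV where
  Adj v w := v ≠ w ∧ (boundaryAdj n m χ v w ∨ boundaryAdj n m χ w v)
  symm := ⟨fun _ _ h => ⟨h.1.symm, h.2.symm⟩⟩
  loopless := ⟨fun _ h => h.1 rfl⟩

/-- A border vertex of the dual graph: one of its hexagons lies outside the grid. -/
def onBorder (n m : ℕ) (v : DualV) : Prop := ¬ ∀ p ∈ hexesOf v, hexOK n m p

def Bcond (n m : ℕ) (χ : ℤ × ℤ → Bool) (p q : ℤ × ℤ) : Prop :=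
  hexOK n m p ∧ hexOK n m q ∧ χ p ≠ χ q

lemma bAdj_def (n m : ℕ) (χ : ℤ × ℤ → Bool) (v w : DualV) :
    (bGraph n m χ).Adj v w ↔ v ≠ w ∧ (boundaryAdj n m χ v w ∨ boundaryAdj n m χ w v) :=
  Iff.rfl

lemma boundaryAdj_comm (n m : ℕ) (χ : ℤ × ℤ → Bool) (v w : DualV) :
    boundaryAdj n m χ w v ↔ boundaryAdj n m χ v w := by
  constructor <;> rintro ⟨hd, p, q, hp, hq, h⟩ <;>
    exact ⟨hd.symm, p, q, ⟨hp.2, hp.1⟩, ⟨hq.2, hq.1⟩, h⟩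

lemma bAdj_iff (n m : ℕ) (χ : ℤ × ℤ → Bool) (v w : DualV) :
    (bGraph n m χ).Adj v w ↔ v ≠ w ∧ boundaryAdj n m χ v w := by
  rw [bAdj_def, boundaryAdj_comm, or_self]

lemma pq_iff (n m : ℕ) (χ : ℤ × ℤ → Bool) (P Q : ℤ × ℤ) (S : Set (ℤ × ℤ))
    (hS : S = {P, Q}) (hne : P ≠ Q) :
    (∃ p q : ℤ × ℤ, p ∈ S ∧ q ∈ S ∧ p ≠ q ∧ hexOK n m p ∧ hexOK n m q ∧ χ p ≠ χ q) ↔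
      Bcond n m χ P Q := by
  subst hS
  constructor
  · rintro ⟨p, q, hp, hq, hpq, h1, h2, h3⟩
    simp only [Set.mem_insert_iff, Set.mem_singleton_iff] at hp hq
    rcases hp with rfl | rfl <;> rcases hq with rfl | rfl
    · exact absurd rfl hpq
    · exact ⟨h1, h2, h3⟩
    · exact ⟨h2, h1, fun h => h3 h.symm⟩
    · exact absurd rfl hpq
  · rintro ⟨h1, h2, h3⟩
    exact ⟨P, Q, by simp, by simp, hne, h1, h2, h3⟩

lemma inter1 (i j : ℤ) :
    hexesOf (i, j, false) ∩ hexesOf (i, j, true) = {(i, j), (i - 1, j + 1)} := by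
  ext ⟨a, b⟩; simp [hexesOf, Prod.ext_iff]; omega

lemma inter2 (i j : ℤ) :
    hexesOf (i, j, false) ∩ hexesOf (i - 1, j, true) = {(i - 1, j), (i - 1, j + 1)} := by
  ext ⟨a, b⟩; simp [hexesOf, Prod.ext_iff]; omega

lemma inter3 (i j : ℤ) :
    hexesOf (i, j, false) ∩ hexesOf (i, j - 1, true) = {(i, j), (i - 1, j)} := by
  ext ⟨a, b⟩; simp [hexesOf, Prod.ext_iff]; omega

lemma mem_nbr_false (n m : ℕ) (χ : ℤ × ℤ → Bool) (i j : ℤ) (w : DualV) :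
    w ∈ (bGraph n m χ).neighborSet (i, j, false) ↔
      (w = (i, j, true) ∧ Bcond n m χ (i, j) (i - 1, j + 1)) ∨
      (w = (i - 1, j, true) ∧ Bcond n m χ (i - 1, j) (i - 1, j + 1)) ∨
      (w = (i, j - 1, true) ∧ Bcond n m χ (i, j) (i - 1, j)) := by
  rw [SimpleGraph.mem_neighborSet, bAdj_iff]
  constructor
  · rintro ⟨hne, hd, hex⟩
    rcases hd with ⟨-, h | h | h⟩ | ⟨hb, h | h | h⟩ <;>
      [skip; skip; skip; exact absurd h (by simp [Prod.ext_iff]);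
       exact absurd h (by simp [Prod.ext_iff]); exact absurd h (by simp [Prod.ext_iff])]
    · subst h
      exact Or.inl ⟨rfl, (pq_iff n m χ _ _ _ (inter1 i j) (by simp [Prod.ext_iff] <;> omega)).mp hex⟩
    · subst h
      exact Or.inr (Or.inl ⟨rfl, (pq_iff n m χ _ _ _ (inter2 i j) (by simp [Prod.ext_iff] <;> omega)).mp hex⟩)
    · subst h
      exact Or.inr (Or.inr ⟨rfl, (pq_iff n m χ _ _ _ (inter3 i j) (by simp [Prod.ext_iff] <;> omega)).mp hex⟩)
  · rintro (⟨rfl, hB⟩ | ⟨rfl, hB⟩ | ⟨rfl, hB⟩)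
    · exact ⟨by simp, Or.inl ⟨rfl, Or.inl rfl⟩,
        (pq_iff n m χ _ _ _ (inter1 i j) (by simp [Prod.ext_iff] <;> omega)).mpr hB⟩
    · exact ⟨by simp, Or.inl ⟨rfl, Or.inr (Or.inl rfl)⟩,
        (pq_iff n m χ _ _ _ (inter2 i j) (by simp [Prod.ext_iff] <;> omega)).mpr hB⟩
    · exact ⟨by simp, Or.inl ⟨rfl, Or.inr (Or.inr rfl)⟩,
        (pq_iff n m χ _ _ _ (inter3 i j) (by simp [Prod.ext_iff] <;> omega)).mpr hB⟩

lemma mem_nbr_true (n m : ℕ) (χ : ℤ × ℤ → Bool) (i j : ℤ) (w : DualV) :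
    w ∈ (bGraph n m χ).neighborSet (i, j, true) ↔
      (w = (i, j, false) ∧ Bcond n m χ (i, j) (i - 1, j + 1)) ∨
      (w = (i + 1, j, false) ∧ Bcond n m χ (i, j) (i, j + 1)) ∨
      (w = (i, j + 1, false) ∧ Bcond n m χ (i, j + 1) (i - 1, j + 1)) := by
  obtain ⟨a, b, bb⟩ := w
  cases bb
  · rw [SimpleGraph.mem_neighborSet, SimpleGraph.adj_comm, ← SimpleGraph.mem_neighborSet,
      mem_nbr_false]
    constructor
    · rintro (⟨h, hB⟩ | ⟨h, hB⟩ | ⟨h, hB⟩) <;> simp only [Prod.ext_iff] at h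
      · obtain ⟨rfl, rfl, -⟩ := h
        exact Or.inl ⟨rfl, hB⟩
      · obtain ⟨h1, rfl, -⟩ := h
        have : a = i + 1 := by omega
        subst this
        exact Or.inr (Or.inl ⟨rfl, by simpa using hB⟩)
      · obtain ⟨rfl, h2, -⟩ := h
        have : b = j + 1 := by omega
        subst this
        exact Or.inr (Or.inr ⟨rfl, by simpa using hB⟩)
    · rintro (⟨h, hB⟩ | ⟨h, hB⟩ | ⟨h, hB⟩) <;> simp only [Prod.ext_iff] at h
      · obtain ⟨rfl, rfl, -⟩ := h
        exact Or.inl ⟨rfl, hB⟩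
      · obtain ⟨rfl, rfl, -⟩ := h
        exact Or.inr (Or.inl ⟨by simp [Prod.ext_iff] <;> omega, by simpa using hB⟩)
      · obtain ⟨rfl, rfl, -⟩ := h
        exact Or.inr (Or.inr ⟨by simp [Prod.ext_iff] <;> omega, by simpa using hB⟩)
  · constructor
    · rintro h
      rw [SimpleGraph.mem_neighborSet, bAdj_iff] at h
      obtain ⟨-, hd, -⟩ := h
      rcases hd with ⟨hb, -⟩ | ⟨hb, -⟩ <;> simp at hb
    · rintro (⟨h, -⟩ | ⟨h, -⟩ | ⟨h, -⟩) <;> simp [Prod.ext_iff] at h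

lemma ncard_aux (G : SimpleGraph DualV) (v w1 w2 w3 : DualV)
    (h12 : w1 ≠ w2) (h13 : w1 ≠ w3) (h23 : w2 ≠ w3) (P1 P2 P3 : Prop)
    (hmem : ∀ w, w ∈ G.neighborSet v ↔ (w = w1 ∧ P1) ∨ (w = w2 ∧ P2) ∨ (w = w3 ∧ P3)) :
    (¬(P1 ∧ P2 ∧ P3) → (G.neighborSet v).ncard ≤ 2) ∧
    ((G.neighborSet v).ncard = 1 →
      (P1 ∧ ¬P2 ∧ ¬P3) ∨ (¬P1 ∧ P2 ∧ ¬P3) ∨ (¬P1 ∧ ¬P2 ∧ P3)) := by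
  classical
  by_cases h1 : P1 <;> by_cases h2 : P2 <;> by_cases h3 : P3
  · have hset : G.neighborSet v = {w1, w2, w3} := Set.ext fun w => by
      simp [hmem, h1, h2, h3]
    refine ⟨fun hc => absurd ⟨h1, h2, h3⟩ hc, fun hc => ?_⟩
    rw [hset] at hc
    rw [Set.ncard_insert_of_notMem (by simp [h12, h13]),
      Set.ncard_insert_of_notMem (by simp [h23]), Set.ncard_singleton] at hc
    omega
  · have hset : G.neighborSet v = {w1, w2} := Set.ext fun w => by simp [hmem, h1, h2, h3]
    rw [hset, Set.ncard_pair h12]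
    exact ⟨fun _ => le_refl 2, fun hc => by omega⟩
  · have hset : G.neighborSet v = {w1, w3} := Set.ext fun w => by simp [hmem, h1, h2, h3]
    rw [hset, Set.ncard_pair h13]
    exact ⟨fun _ => le_refl 2, fun hc => by omega⟩
  · have hset : G.neighborSet v = {w1} := Set.ext fun w => by simp [hmem, h1, h2, h3]
    rw [hset, Set.ncard_singleton]
    exact ⟨fun _ => by omega, fun _ => Or.inl ⟨h1, h2, h3⟩⟩
  · have hset : G.neighborSet v = {w2, w3} := Set.ext fun w => by simp [hmem, h1, h2, h3]
    rw [hset, Set.ncard_pair h23]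
    exact ⟨fun _ => le_refl 2, fun hc => by omega⟩
  · have hset : G.neighborSet v = {w2} := Set.ext fun w => by simp [hmem, h1, h2, h3]
    rw [hset, Set.ncard_singleton]
    exact ⟨fun _ => by omega, fun _ => Or.inr (Or.inl ⟨h1, h2, h3⟩)⟩
  · have hset : G.neighborSet v = {w3} := Set.ext fun w => by simp [hmem, h1, h2, h3]
    rw [hset, Set.ncard_singleton]
    exact ⟨fun _ => by omega, fun _ => Or.inr (Or.inr ⟨h1, h2, h3⟩)⟩
  · have hset : G.neighborSet v = ∅ := Set.ext fun w => by simp [hmem, h1, h2, h3]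
    rw [hset, Set.ncard_empty]
    exact ⟨fun _ => by omega, fun hc => by omega⟩

lemma bool3 (x y z : Bool) (h1 : x ≠ z) (h2 : y ≠ z) (h3 : x ≠ y) : False := by
  cases x <;> cases y <;> cases z <;> simp_all

lemma notB (n m : ℕ) (χ : ℤ × ℤ → Bool) (p q : ℤ × ℤ) (h : ¬ Bcond n m χ p q)
    (hp : hexOK n m p) (hq : hexOK n m q) : χ p = χ q := by
  by_contra hc; exact h ⟨hp, hq, hc⟩

lemma part12 (n m : ℕ) (χ : ℤ × ℤ → Bool) (v : DualV) :
    ((bGraph n m χ).neighborSet v).ncard ≤ 2 ∧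
    (((bGraph n m χ).neighborSet v).ncard = 1 → onBorder n m v) := by
  obtain ⟨i, j, bb⟩ := v
  cases bb
  · have H := ncard_aux (bGraph n m χ) (i, j, false) (i, j, true) (i - 1, j, true)
      (i, j - 1, true) (by simp [Prod.ext_iff] <;> omega) (by simp [Prod.ext_iff] <;> omega)
      (by simp [Prod.ext_iff] <;> omega) _ _ _ (mem_nbr_false n m χ i j)
    refine ⟨H.1 ?_, fun hc => ?_⟩
    · rintro ⟨⟨-, -, e1⟩, ⟨-, -, e2⟩, ⟨-, -, e3⟩⟩
      exact bool3 _ _ _ e1 e2 e3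
    · intro hall
      have oka : hexOK n m (i, j) := hall _ (by simp [hexesOf])
      have okb : hexOK n m (i - 1, j) := hall _ (by simp [hexesOf])
      have okc : hexOK n m (i - 1, j + 1) := hall _ (by simp [hexesOf])
      rcases H.2 hc with ⟨⟨-, -, e1⟩, h2, h3⟩ | ⟨h1, ⟨-, -, e2⟩, h3⟩ | ⟨h1, h2, ⟨-, -, e3⟩⟩
      · exact e1 ((notB n m χ _ _ h3 oka okb).trans (notB n m χ _ _ h2 okb okc))
      · exact e2 ((notB n m χ _ _ h3 oka okb).symm.trans (notB n m χ _ _ h1 oka okc))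
      · exact e3 ((notB n m χ _ _ h1 oka okc).trans (notB n m χ _ _ h2 okb okc).symm)
  · have H := ncard_aux (bGraph n m χ) (i, j, true) (i, j, false) (i + 1, j, false)
      (i, j + 1, false) (by simp [Prod.ext_iff] <;> omega) (by simp [Prod.ext_iff] <;> omega)
      (by simp [Prod.ext_iff] <;> omega) _ _ _ (mem_nbr_true n m χ i j)
    -- hexes: a = (i,j), b = (i,j+1), c = (i-1,j+1); P1 : (a,c), P2 : (a,b), P3 : (b,c)
    refine ⟨H.1 ?_, fun hc => ?_⟩
    · rintro ⟨⟨-, -, e1⟩, ⟨-, -, e2⟩, ⟨-, -, e3⟩⟩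
      exact bool3 _ _ _ e1 e3 e2
    · intro hall
      have oka : hexOK n m (i, j) := hall _ (by simp [hexesOf])
      have okb : hexOK n m (i, j + 1) := hall _ (by simp [hexesOf])
      have okc : hexOK n m (i - 1, j + 1) := hall _ (by simp [hexesOf])
      rcases H.2 hc with ⟨⟨-, -, e1⟩, h2, h3⟩ | ⟨h1, ⟨-, -, e2⟩, h3⟩ | ⟨h1, h2, ⟨-, -, e3⟩⟩
      · exact e1 ((notB n m χ _ _ h2 oka okb).trans (notB n m χ _ _ h3 okb okc))
      · exact e2 ((notB n m χ _ _ h1 oka okc).trans (notB n m χ _ _ h3 okb okc).symm)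
      · exact e3 ((notB n m χ _ _ h2 oka okb).symm.trans (notB n m χ _ _ h1 oka okc))

lemma nbr_mem_box (n m : ℕ) (χ : ℤ × ℤ → Bool) (v w : DualV)
    (h : (bGraph n m χ).Adj v w) :
    0 ≤ v.1 ∧ v.1 ≤ (n : ℤ) + 1 ∧ 0 ≤ v.2.1 ∧ v.2.1 ≤ (m : ℤ) + 1 := by
  rw [bAdj_def] at h
  have hex : ∃ p : ℤ × ℤ, p ∈ hexesOf v ∧ hexOK n m p := by
    obtain ⟨-, ⟨-, p, q, hp, hq, hpq, hokp, -⟩ | ⟨-, p, q, hp, hq, hpq, hokp, -⟩⟩ := h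
    · exact ⟨p, hp.1, hokp⟩
    · exact ⟨p, hp.2, hokp⟩
  obtain ⟨⟨a, b⟩, hmem, hok⟩ := hex
  obtain ⟨i, j, bb⟩ := v
  obtain ⟨h1, h2, h3, h4⟩ := hok
  simp only at h1 h2 h3 h4
  cases bb <;> simp [hexesOf, Prod.ext_iff] at hmem <;> simp only [] <;> omega

/-- The subgraph of `G` on the vertices of `S`, keeping only edges whose
endpoints reach `v`. -/
def compGraph {V : Type*} (G : SimpleGraph V) (v : V) (S : Finset V) :
    SimpleGraph {x // x ∈ S} where
  Adj x y := G.Adj x.1 y.1 ∧ G.Reachable x.1 v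
  symm := ⟨by rintro x y ⟨ha, hr⟩; exact ⟨ha.symm, ha.symm.reachable.trans hr⟩⟩
  loopless := ⟨by rintro x ⟨ha, -⟩; exact G.irrefl ha⟩

lemma part3 (n m : ℕ) (χ : ℤ × ℤ → Bool) (v : DualV)
    (hv : ((bGraph n m χ).neighborSet v).ncard = 1) :
    ∃ w : DualV, w ≠ v ∧ ((bGraph n m χ).neighborSet w).ncard = 1 ∧ onBorder n m w ∧
      Nonempty ((bGraph n m χ).Path v w) := by
  classical
  set G := bGraph n m χ with hG
  set S : Finset DualV :=
    (Finset.Icc (0 : ℤ) ((n : ℤ) + 1)) ×ˢ ((Finset.Icc (0 : ℤ) ((m : ℤ) + 1)) ×ˢ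
      (Finset.univ : Finset Bool)) with hSdef
  have hS : ∀ x : DualV, (G.neighborSet x).Nonempty → x ∈ S := by
    rintro x ⟨w, hw⟩
    have hb := nbr_mem_box n m χ x w hw
    simp only [hSdef, Finset.mem_product, Finset.mem_Icc, Finset.mem_univ, and_true]
    exact ⟨⟨hb.1, hb.2.1⟩, hb.2.2.1, hb.2.2.2⟩
  have hvS : v ∈ S := hS v (Set.nonempty_of_ncard_ne_zero (by omega))
  set H := compGraph G v S with hH
  haveI : Fintype {x // x ∈ S} := FinsetCoe.fintype S
  haveI : DecidableRel H.Adj := Classical.decRel _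
  have himg : ∀ x : {x // x ∈ S}, G.Reachable x.1 v →
      Subtype.val '' (H.neighborSet x) = G.neighborSet x.1 := by
    intro x hr
    ext y
    constructor
    · rintro ⟨z, hz, rfl⟩
      exact hz.1
    · intro hy
      have hadj : G.Adj x.1 y := hy
      have hyS : y ∈ S := hS y ⟨x.1, hadj.symm⟩
      exact ⟨⟨y, hyS⟩, ⟨hadj, hr⟩, rfl⟩
  have hdeg : ∀ x : {x // x ∈ S}, G.Reachable x.1 v →
      H.degree x = (G.neighborSet x.1).ncard := by
    intro x hr
    rw [← himg x hr, Set.ncard_image_of_injective _ Subtype.val_injective,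
      ← SimpleGraph.card_neighborSet_eq_degree, Set.ncard_eq_toFinset_card',
      Set.toFinset_card]
  have hv1 : H.degree ⟨v, hvS⟩ = 1 := by
    rw [hdeg ⟨v, hvS⟩ (SimpleGraph.Reachable.refl v)]
    exact hv
  have hodd := H.odd_card_odd_degree_vertices_ne ⟨v, hvS⟩ (by rw [hv1]; exact ⟨0, rfl⟩)
  obtain ⟨w', hw'⟩ := Finset.card_pos.mp hodd.pos
  rw [Finset.mem_filter] at hw'
  obtain ⟨-, hne, hoddw⟩ := hw'
  obtain ⟨y, hy⟩ := (H.degree_pos_iff_exists_adj w').mp hoddw.pos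
  have hr : G.Reachable w'.1 v := hy.2
  have hdw : (G.neighborSet w'.1).ncard = 1 := by
    have h1 := hdeg w' hr
    rw [h1] at hoddw
    obtain ⟨k, hk⟩ := hoddw
    have h2 := (part12 n m χ w'.1).1
    rw [← hG] at h2
    omega
  refine ⟨w'.1, fun h => hne (Subtype.ext h), hdw, (part12 n m χ w'.1).2 hdw, ?_⟩
  obtain ⟨wk⟩ := hr.symm
  exact ⟨wk.toPath⟩

/-- In any 2-colouring of the `n × m` hexagonal grid, the colour-boundary
subgraph of the dual graph has every vertex of degree at most 2, degree-1
vertices occur only on the border, and consequently the boundary decomposes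
into paths and cycles where every path starts and ends at border vertices:
from each degree-1 vertex there is a boundary path to another degree-1 border
vertex. -/
theorem stmt14 (n m : ℕ) (χ : ℤ × ℤ → Bool) :
    (∀ v : DualV, ((bGraph n m χ).neighborSet v).ncard ≤ 2) ∧
    (∀ v : DualV, ((bGraph n m χ).neighborSet v).ncard = 1 → onBorder n m v) ∧
    (∀ v : DualV, ((bGraph n m χ).neighborSet v).ncard = 1 →
      ∃ w : DualV, w ≠ v ∧ ((bGraph n m χ).neighborSet w).ncard = 1 ∧ onBorder n m w ∧
        Nonempty ((bGraph n m χ).Path v w)) :=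
  ⟨fun v => (part12 n m χ v).1, fun v => (part12 n m χ v).2, fun v hv => part3 n m χ v hv⟩
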